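/- Finite model property for negative universal sentences: if σ is a first-order sentence of the form (∀v₁)…(∀vₖ)(¬θ₁ ∧ … ∧ ¬θₙ) with each θᵢ atomic, over a language with finitely many function and relation symbols, then σ has a model if and only if σ has a finite model. -/

import Mathlib

set_option maxHeartbeats 1000000
open FirstOrder Language
namespace NegUnivFMP


open FirstOrder.Language FirstOrder.Language.Term Finset

variable {L : Language}

/-- size of a term -/
def tsize : L.Term ℕ → ℕ
  | .var _ => 1
  | .func _ ts => 1 + ∑ i, tsize (ts i)

/-- a system of equations -/
abbrev Sys (L : Language) := List (L.Term ℕ × L.Term ℕ)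

def svars (E : Sys L) : Finset ℕ :=
  E.foldr (fun p s => p.1.varFinset ∪ p.2.varFinset ∪ s) ∅

def ssize (E : Sys L) : ℕ := (E.map fun p => tsize p.1 + tsize p.2).sum

/-- the system `E` has no solution in `N` -/
def Fails (N : Type*) [L.Structure N] (E : Sys L) : Prop :=
  ∀ v : ℕ → N, ∃ p ∈ E, Term.realize v p.1 ≠ Term.realize v p.2

lemma mem_svars {x : ℕ} {E : Sys L} :
    x ∈ svars E ↔ ∃ p ∈ E, x ∈ p.1.varFinset ∨ x ∈ p.2.varFinset := by
  induction E with
  | nil => simp [svars]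
  | cons a E ih =>
    simp only [svars, List.foldr_cons, Finset.mem_union, List.mem_cons] at *
    constructor
    · rintro ((h | h) | h)
      · exact ⟨a, Or.inl rfl, Or.inl h⟩
      · exact ⟨a, Or.inl rfl, Or.inr h⟩
      · obtain ⟨p, hp, h⟩ := ih.1 h
        exact ⟨p, Or.inr hp, h⟩
    · rintro ⟨p, (rfl | hp), h⟩
      · tauto
      · exact Or.inr (ih.2 ⟨p, hp, h⟩)

/-- `OccAt x t q` : the variable `x` occurs in `t` along the path `q`. -/
inductive OccAt (x : ℕ) : L.Term ℕ → List (Σ n : ℕ, L.Functions n × Fin n) → Prop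
  | nil : OccAt x (.var x) []
  | cons {n : ℕ} (f : L.Functions n) (ts : Fin n → L.Term ℕ) (j : Fin n)
      {q : List (Σ n : ℕ, L.Functions n × Fin n)} :
      OccAt x (ts j) q → OccAt x (.func f ts) (⟨n, f, j⟩ :: q)

lemma exists_occ_of_mem_varFinset {x : ℕ} : ∀ {t : L.Term ℕ}, x ∈ t.varFinset →
    ∃ q, OccAt x t q := by
  intro t
  induction t with
  | var y =>
    intro h
    simp only [varFinset, Finset.mem_singleton] at h
    subst h
    exact ⟨[], .nil⟩
  | func f ts ih =>
    intro h
    simp only [varFinset, Finset.mem_biUnion, Finset.mem_univ, true_and] at h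
    obtain ⟨i, hi⟩ := h
    obtain ⟨q, hq⟩ := ih i hi
    exact ⟨_, .cons f ts i hq⟩

lemma occ_var {x y : ℕ} {q} (h : OccAt x (Term.var y : L.Term ℕ) q) : y = x := by
  cases h; rfl

/-- the single-variable substitution -/
def dsub (x : ℕ) (t : L.Term ℕ) : ℕ → L.Term ℕ := fun y => if y = x then t else .var y

def substSys (x : ℕ) (t : L.Term ℕ) (E : Sys L) : Sys L :=
  E.map fun st => (st.1.subst (dsub x t), st.2.subst (dsub x t))

lemma subst_dsub_eq_self {x : ℕ} {t : L.Term ℕ} :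
    ∀ {u : L.Term ℕ}, x ∉ u.varFinset → u.subst (dsub x t) = u := by
  intro u
  induction u with
  | var y =>
    intro h
    simp only [varFinset, Finset.mem_singleton] at h
    simp [dsub, Ne.symm h]
  | func f ts ih =>
    intro h
    simp only [varFinset, Finset.mem_biUnion, Finset.mem_univ, true_and, not_exists] at h
    simp only [Term.subst]
    congr 1
    funext i
    exact ih i (h i)

lemma varFinset_subst_subset (x : ℕ) (t : L.Term ℕ) :
    ∀ u : L.Term ℕ, (u.subst (dsub x t)).varFinset ⊆ u.varFinset.erase x ∪ t.varFinset := by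
  intro u
  induction u with
  | var y =>
    by_cases h : y = x
    · subst h
      simp [dsub]
    · simp [dsub, h, varFinset, Finset.singleton_subset_iff, Finset.mem_union,
        Finset.mem_erase, h]
  | func f ts ih =>
    intro y hy
    simp only [Term.subst, varFinset, Finset.mem_biUnion, Finset.mem_univ, true_and] at hy
    obtain ⟨i, hi⟩ := hy
    have := ih i hi
    simp only [Finset.mem_union, Finset.mem_erase] at this ⊢
    rcases this with ⟨hne, hmem⟩ | h
    · exact Or.inl ⟨hne, by
        simp only [varFinset, Finset.mem_biUnion, Finset.mem_univ, true_and]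
        exact ⟨i, hmem⟩⟩
    · exact Or.inr h



open FirstOrder.Language FirstOrder.Language.Term Finset

variable {L : Language}

abbrev Lam (L : Language) := (Σ n : ℕ, L.Functions n × Fin n)


structure OccA (p : List (Lam L)) : Type where
  f : Fin p.length → ZMod (p.length + 1)

def Vv {p : List (Lam L)} (a : OccA p) (r : ℕ) : ZMod (p.length + 1) :=
  if h : r < p.length then a.f ⟨r, h⟩
  else if h0 : 0 < p.length then a.f ⟨0, h0⟩ else 0

open scoped Classical in
noncomputable instance occStruct (p : List (Lam L)) : L.Structure (OccA p) where
  funMap {n} g bb := ⟨fun r =>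
    if h : (⟨(p.get r).1, (p.get r).2.1⟩ : Σ n : ℕ, L.Functions n) = ⟨n, g⟩ then
      Vv (bb (Fin.cast (congrArg Sigma.fst h) (p.get r).2.2)) (r.1 + 1) + 1
    else 0⟩
  RelMap _ _ := False

instance (p : List (Lam L)) : Finite (OccA p) :=
  Finite.of_injective OccA.f (fun a b h => by cases a; cases b; cases h; rfl)

instance (p : List (Lam L)) : Nonempty (OccA p) := ⟨⟨fun _ => 0⟩⟩

open scoped Classical in
lemma occ_f_funMap (p : List (Lam L)) {n} (g : L.Functions n) (bb : Fin n → OccA p)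
    (r : Fin p.length) :
    (Structure.funMap (M := OccA p) g bb).f r =
      if h : (⟨(p.get r).1, (p.get r).2.1⟩ : Σ n : ℕ, L.Functions n) = ⟨n, g⟩ then
        Vv (bb (Fin.cast (congrArg Sigma.fst h) (p.get r).2.2)) (r.1 + 1) + 1
      else 0 := rfl

lemma cast_snd {z : Lam L} {n : ℕ} {g : L.Functions n} {j : Fin n} (h : z = ⟨n, g, j⟩)
    (e : z.1 = n) : Fin.cast e z.2.2 = j := by subst h; rfl

lemma occ_f_funMap_match (p : List (Lam L)) {n} (g : L.Functions n) (bb : Fin n → OccA p)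
    (r : Fin p.length) (j : Fin n) (hget : p.get r = ⟨n, g, j⟩) :
    (Structure.funMap (M := OccA p) g bb).f r = Vv (bb j) (r.1 + 1) + 1 := by
  have h0 : (⟨(p.get r).1, (p.get r).2.1⟩ : Σ n : ℕ, L.Functions n) = ⟨n, g⟩ := by rw [hget]
  rw [occ_f_funMap, dif_pos h0]
  congr 2
  exact congrArg bb (cast_snd hget (congrArg Sigma.fst h0))

lemma occ_key {x : ℕ} {p : List (Lam L)} {u : L.Term ℕ} {q : List (Lam L)}
    (h : OccAt x u q) :
    ∀ r : ℕ, r ≤ p.length → p.drop r = q → ∀ v : ℕ → OccA p,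
      Vv (Term.realize v u) r = (p.length - r : ℕ) + Vv (v x) p.length := by
  induction h with
  | nil =>
    intro r hr hd v
    have hle : p.length ≤ r := by
      rw [← List.drop_eq_nil_iff]; exact hd
    have : r = p.length := le_antisymm hr hle
    subst this
    simp [Term.realize, Nat.sub_self]
  | @cons n f ts j q' hocc ih =>
    intro r hr hd v
    have hrlt : r < p.length := by
      by_contra h'
      push_neg at h'
      rw [List.drop_eq_nil_of_le h'] at hd
      exact (List.cons_ne_nil _ _) hd.symm
    rw [List.drop_eq_getElem_cons hrlt] at hd
    injection hd with hget hdrop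
    have hreal : Term.realize v (Term.func f ts)
        = Structure.funMap f (fun i => Term.realize v (ts i)) := rfl
    rw [Vv, dif_pos hrlt, hreal, occ_f_funMap_match p f _ ⟨r, hrlt⟩ j hget]
    rw [ih (r + 1) hrlt hdrop v]
    have harith : p.length - r = (p.length - (r + 1)) + 1 := by omega
    rw [harith, Nat.cast_add, Nat.cast_one]
    ring

lemma occ_main {x : ℕ} {t : L.Term ℕ} {q : List (Lam L)} (h : OccAt x t q) (hq : q ≠ []) :
    ∀ v : ℕ → OccA (L := L) q, v x ≠ Term.realize v t := by
  intro v heq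
  have hlen : 0 < q.length := List.length_pos_iff.mpr hq
  have hk := occ_key (p := q) h 0 (Nat.zero_le _) (by simp) v
  rw [← heq] at hk
  rw [Vv, Vv, dif_pos hlen, dif_neg (lt_irrefl _), dif_pos hlen, Nat.sub_zero] at hk
  have h0 : (q.length : ZMod (q.length + 1)) = 0 := right_eq_add.mp hk
  rw [ZMod.natCast_eq_zero_iff] at h0
  have := Nat.le_of_dvd hlen h0
  omega

lemma occ_relMap (p : List (Lam L)) {n} (R : L.Relations n)
    (xs : Fin n → OccA p) : ¬ Structure.RelMap R xs := fun h => h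



open FirstOrder.Language FirstOrder.Language.Term Finset

variable {L : Language}

/-! ### The "head" algebra, detecting clashes of function symbols -/

structure HeadA {m : ℕ} (F : (Σ n : ℕ, L.Functions n) ≃ Fin m) : Type where
  val : Option (Fin m)

variable {m : ℕ}

instance headStruct (F : (Σ n : ℕ, L.Functions n) ≃ Fin m) : L.Structure (HeadA F) where
  funMap {n} g _ := ⟨some (F ⟨n, g⟩)⟩
  RelMap _ _ := False

instance (F : (Σ n : ℕ, L.Functions n) ≃ Fin m) : Finite (HeadA F) :=
  Finite.of_injective HeadA.val (fun a b h => by cases a; cases b; cases h; rfl)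

instance (F : (Σ n : ℕ, L.Functions n) ≃ Fin m) : Nonempty (HeadA F) := ⟨⟨none⟩⟩

lemma head_relMap (F : (Σ n : ℕ, L.Functions n) ≃ Fin m) {n} (R : L.Relations n)
    (xs : Fin n → HeadA F) : ¬ Structure.RelMap R xs := fun h => h

lemma head_clash (F : (Σ n : ℕ, L.Functions n) ≃ Fin m) {n n' : ℕ}
    (f : L.Functions n) (g : L.Functions n')
    (hne : (⟨n, f⟩ : Σ n, L.Functions n) ≠ ⟨n', g⟩)
    (ts : Fin n → L.Term ℕ) (us : Fin n' → L.Term ℕ) (v : ℕ → HeadA F) :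
    Term.realize v (Term.func f ts) ≠ Term.realize v (Term.func g us) := by
  intro h
  have h2 : (⟨some (F ⟨n, f⟩)⟩ : HeadA F) = ⟨some (F ⟨n', g⟩)⟩ := h
  have h3 : F ⟨n, f⟩ = F ⟨n', g⟩ := by
    have := congrArg HeadA.val h2
    simpa using this
  exact hne (F.injective h3)

/-! ### Binary products -/

structure PairA (A B : Type) : Type where
  val : A × B

instance pairStruct (A B : Type) [L.Structure A] [L.Structure B] :
    L.Structure (PairA A B) where
  funMap {n} g aa := ⟨(Structure.funMap g fun i => (aa i).val.1,
    Structure.funMap g fun i => (aa i).val.2)⟩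
  RelMap _ _ := False

instance (A B : Type) [Finite A] [Finite B] : Finite (PairA A B) :=
  Finite.of_injective PairA.val (fun a b h => by cases a; cases b; cases h; rfl)

instance (A B : Type) [Nonempty A] [Nonempty B] : Nonempty (PairA A B) := by
  obtain ⟨a⟩ := ‹Nonempty A›; obtain ⟨b⟩ := ‹Nonempty B›; exact ⟨⟨(a, b)⟩⟩

lemma pair_realize {A B : Type} [L.Structure A] [L.Structure B] (v : ℕ → PairA A B)
    (u : L.Term ℕ) :
    Term.realize v u = ⟨(Term.realize (fun y => (v y).val.1) u,
      Term.realize (fun y => (v y).val.2) u)⟩ := by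
  induction u with
  | var y => rfl
  | func f ts ih =>
    show (Structure.funMap f fun i => Term.realize v (ts i)) = _
    show PairA.mk _ = _
    simp only [Term.realize]
    congr 1
    refine Prod.ext ?_ ?_ <;> · simp only; congr 1; funext i; rw [ih i]

/-! ### The one-step unfolding algebra, making decomposition possible -/

noncomputable def arityBound (F : (Σ n : ℕ, L.Functions n) ≃ Fin m) : ℕ :=
  letI : Fintype (Σ n : ℕ, L.Functions n) := Fintype.ofEquiv (Fin m) F.symm
  Finset.univ.sup (fun z : Σ n : ℕ, L.Functions n => z.1)

lemma arity_le_arityBound (F : (Σ n : ℕ, L.Functions n) ≃ Fin m)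
    (z : Σ n : ℕ, L.Functions n) : z.1 ≤ arityBound F := by
  letI : Fintype (Σ n : ℕ, L.Functions n) := Fintype.ofEquiv (Fin m) F.symm
  exact Finset.le_sup (f := fun z : Σ n : ℕ, L.Functions n => z.1) (Finset.mem_univ z)

structure UnA (F : (Σ n : ℕ, L.Functions n) ≃ Fin m) (A : Type) : Type where
  val : A ⊕ (Fin m × (Fin (arityBound F) → A))

variable {F : (Σ n : ℕ, L.Functions n) ≃ Fin m} {A : Type}

noncomputable def pad (F : (Σ n : ℕ, L.Functions n) ≃ Fin m) (a₀ : A) {n : ℕ}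
    (c : Fin n → A) : Fin (arityBound F) → A :=
  fun j => if h : j.1 < n then c ⟨j.1, h⟩ else a₀

noncomputable def uproj [L.Structure A] (b : UnA F A) : A :=
  match b.val with
  | .inl a => a
  | .inr (s, c) => Structure.funMap (F.symm s).2
      (fun i => c ⟨i.1, lt_of_lt_of_le i.2 (arity_le_arityBound F (F.symm s))⟩)

noncomputable instance unStruct [L.Structure A] [Nonempty A] : L.Structure (UnA F A) where
  funMap {n} g aa := ⟨.inr (F ⟨n, g⟩, pad F (Classical.arbitrary A) fun i => uproj (aa i))⟩
  RelMap _ _ := False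

instance [Finite A] : Finite (UnA F A) :=
  Finite.of_injective UnA.val (fun a b h => by cases a; cases b; cases h; rfl)

instance [Nonempty A] : Nonempty (UnA F A) := by
  obtain ⟨a⟩ := ‹Nonempty A›; exact ⟨⟨.inl a⟩⟩

lemma decode_aux [L.Structure A] (z w : Σ n : ℕ, L.Functions n) (h : z = w)
    (c : Fin w.1 → A) (a₀ : A) :
    Structure.funMap z.2
      (fun i : Fin z.1 => pad F a₀ c ⟨i.1, lt_of_lt_of_le i.2 (arity_le_arityBound F z)⟩)
      = Structure.funMap w.2 c := by
  subst h
  congr 1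
  funext i
  simp [pad]

lemma uproj_funMap [L.Structure A] [Nonempty A] {n : ℕ} (g : L.Functions n)
    (aa : Fin n → UnA F A) :
    uproj (Structure.funMap (M := UnA F A) g aa) = Structure.funMap g (fun i => uproj (aa i)) := by
  show uproj (⟨.inr (F ⟨n, g⟩, pad F (Classical.arbitrary A) fun i => uproj (aa i))⟩ : UnA F A) = _
  show Structure.funMap (F.symm (F ⟨n, g⟩)).2 _ = _
  exact decode_aux (F.symm (F ⟨n, g⟩)) ⟨n, g⟩ (F.symm_apply_apply _) _ _

lemma uproj_realize [L.Structure A] [Nonempty A] (v : ℕ → UnA F A) (u : L.Term ℕ) :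
    uproj (Term.realize v u) = Term.realize (fun y => uproj (v y)) u := by
  induction u with
  | var y => rfl
  | func f ts ih =>
    show uproj (Structure.funMap f fun i => Term.realize v (ts i)) = _
    rw [uproj_funMap]
    show _ = Structure.funMap f fun i => Term.realize (fun y => uproj (v y)) (ts i)
    congr 1
    funext i
    exact ih i

lemma un_funMap_inj [L.Structure A] [Nonempty A] {n : ℕ} (g : L.Functions n)
    (X Y : Fin n → UnA F A)
    (h : Structure.funMap (M := UnA F A) g X = Structure.funMap g Y) (i : Fin n) :
    uproj (X i) = uproj (Y i) := by
  have h2 : (⟨.inr (F ⟨n, g⟩, pad F (Classical.arbitrary A) fun i => uproj (X i))⟩ : UnA F A)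
      = ⟨.inr (F ⟨n, g⟩, pad F (Classical.arbitrary A) fun i => uproj (Y i))⟩ := h
  have h3 := congrArg UnA.val h2
  simp only [Sum.inr.injEq, Prod.mk.injEq] at h3
  have h4 := congrFun h3.2 ⟨i.1, lt_of_lt_of_le i.2 (arity_le_arityBound F ⟨n, g⟩)⟩
  simpa [pad, i.2] using h4


/-! ### Transfer lemmas for the unification-style induction -/

section transfer

variable {N : Type*} [L.Structure N]

lemma fails_cons_of (E : Sys L) (st : L.Term ℕ × L.Term ℕ) (h : Fails N E) :
    Fails N (st :: E) := by
  intro v; obtain ⟨p, hp, hne⟩ := h v; exact ⟨p, List.mem_cons_of_mem _ hp, hne⟩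

lemma fails_drop {a : L.Term ℕ} {E : Sys L} (h : Fails N ((a, a) :: E)) : Fails N E := by
  intro v; obtain ⟨p, hp, hne⟩ := h v
  rcases List.mem_cons.mp hp with heq | hp
  · rw [heq] at hne; exact absurd rfl hne
  · exact ⟨p, hp, hne⟩

lemma fails_swap {a b : L.Term ℕ} {E : Sys L} (h : Fails N ((a, b) :: E)) :
    Fails N ((b, a) :: E) := by
  intro v; obtain ⟨p, hp, hne⟩ := h v
  rcases List.mem_cons.mp hp with heq | hp
  · rw [heq] at hne
    exact ⟨(b, a), List.mem_cons_self, fun e => hne e.symm⟩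
  · exact ⟨p, List.mem_cons_of_mem _ hp, hne⟩

lemma fails_subst_of_fails {x : ℕ} {t : L.Term ℕ} {E : Sys L}
    (hx : x ∉ t.varFinset) (h : Fails N ((Term.var x, t) :: E)) :
    Fails N (substSys x t E) := by
  intro v
  obtain ⟨p, hp, hne⟩ := h (fun y => Term.realize v (dsub x t y))
  rcases List.mem_cons.mp hp with heq | hp
  · exfalso
    rw [heq] at hne
    apply hne
    show Term.realize _ (Term.var x) = _
    rw [Term.realize_var]
    show Term.realize v (dsub x t x) = _
    rw [show dsub x t x = t from if_pos rfl, ← Term.realize_subst,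
      subst_dsub_eq_self hx]
  · refine ⟨(p.1.subst (dsub x t), p.2.subst (dsub x t)), List.mem_map_of_mem hp, ?_⟩
    simpa only [Term.realize_subst] using hne

lemma fails_of_fails_subst {x : ℕ} {t : L.Term ℕ} {E : Sys L}
    (h : Fails N (substSys x t E)) : Fails N ((Term.var x, t) :: E) := by
  intro v
  by_cases hvx : v x = Term.realize v t
  · obtain ⟨p', hp', hne'⟩ := h v
    obtain ⟨p, hp, rfl⟩ := List.mem_map.mp hp'
    refine ⟨p, List.mem_cons_of_mem _ hp, ?_⟩
    have hw : (fun y => Term.realize v (dsub x t y)) = v := by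
      funext y
      by_cases hy : y = x
      · subst hy; rw [show dsub y t y = t from if_pos rfl]; exact hvx.symm
      · rw [show dsub x t y = Term.var y from if_neg hy]; rfl
    simp only [Term.realize_subst] at hne'
    rw [hw] at hne'
    exact hne'
  · exact ⟨(Term.var x, t), List.mem_cons_self, hvx⟩

lemma fails_decomp {n : ℕ} {f : L.Functions n} {ts us : Fin n → L.Term ℕ} {E : Sys L}
    (h : Fails N ((Term.func f ts, Term.func f us) :: E)) :
    Fails N ((List.ofFn fun i => (ts i, us i)) ++ E) := by
  intro v
  obtain ⟨p, hp, hne⟩ := h v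
  rcases List.mem_cons.mp hp with heq | hp
  · rw [heq] at hne
    have hex : ∃ i, Term.realize v (ts i) ≠ Term.realize v (us i) := by
      by_contra h'
      push_neg at h'
      apply hne
      show Structure.funMap f _ = Structure.funMap f _
      congr 1
      funext i
      exact h' i
    obtain ⟨i, hi⟩ := hex
    exact ⟨(ts i, us i), List.mem_append_left _ (List.mem_ofFn.mpr ⟨i, rfl⟩), hi⟩
  · exact ⟨p, List.mem_append_right _ hp, hne⟩

end transfer

/-! ### Measure lemmas -/

lemma svars_tail_subset (st : L.Term ℕ × L.Term ℕ) (E : Sys L) :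
    svars E ⊆ svars (st :: E) := by
  intro y hy
  rw [mem_svars] at hy ⊢
  obtain ⟨p, hp, h⟩ := hy
  exact ⟨p, List.mem_cons_of_mem _ hp, h⟩

lemma svars_swap (a b : L.Term ℕ) (E : Sys L) :
    svars ((b, a) :: E) = svars ((a, b) :: E) := by
  ext y
  rw [mem_svars, mem_svars]
  constructor <;>
  · rintro ⟨p, hp, h⟩
    rcases List.mem_cons.mp hp with heq | hp
    · subst heq
      exact ⟨_, List.mem_cons_self, h.symm⟩
    · exact ⟨p, List.mem_cons_of_mem _ hp, h⟩

lemma x_mem_svars (x : ℕ) (t : L.Term ℕ) (E : Sys L) :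
    x ∈ svars ((Term.var x, t) :: E) := by
  rw [mem_svars]
  refine ⟨(Term.var x, t), List.mem_cons_self, Or.inl ?_⟩
  simp [Term.varFinset]

lemma svars_substSys_subset {x : ℕ} {t : L.Term ℕ} (hx : x ∉ t.varFinset) (E : Sys L) :
    svars (substSys x t E) ⊆ (svars ((Term.var x, t) :: E)).erase x := by
  intro y hy
  rw [mem_svars] at hy
  obtain ⟨p', hp', hor⟩ := hy
  obtain ⟨p, hp, rfl⟩ := List.mem_map.mp hp'
  have key : ∀ u : L.Term ℕ, y ∈ (u.subst (dsub x t)).varFinset →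
      y ∈ (svars ((Term.var x, t) :: E)).erase x ∨
        (y ≠ x ∧ y ∈ u.varFinset) := by
    intro u hu
    have := varFinset_subst_subset x t u hu
    rw [Finset.mem_union, Finset.mem_erase] at this
    rcases this with ⟨hne, hmem⟩ | hmem
    · exact Or.inr ⟨hne, hmem⟩
    · refine Or.inl (Finset.mem_erase.mpr ⟨fun e => hx (e ▸ hmem), ?_⟩)
      rw [mem_svars]
      exact ⟨(Term.var x, t), List.mem_cons_self, Or.inr hmem⟩
  rcases hor with h1 | h1
  · rcases key p.1 h1 with h2 | ⟨hne, hmem⟩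
    · exact h2
    · exact Finset.mem_erase.mpr ⟨hne, mem_svars.mpr ⟨p, List.mem_cons_of_mem _ hp, Or.inl hmem⟩⟩
  · rcases key p.2 h1 with h2 | ⟨hne, hmem⟩
    · exact h2
    · exact Finset.mem_erase.mpr ⟨hne, mem_svars.mpr ⟨p, List.mem_cons_of_mem _ hp, Or.inr hmem⟩⟩

lemma svars_decomp_subset {n : ℕ} (f : L.Functions n) (ts us : Fin n → L.Term ℕ) (E : Sys L) :
    svars ((List.ofFn fun i => (ts i, us i)) ++ E) ⊆
      svars ((Term.func f ts, Term.func f us) :: E) := by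
  intro y hy
  rw [mem_svars] at hy ⊢
  obtain ⟨p, hp, hor⟩ := hy
  rcases List.mem_append.mp hp with hp | hp
  · obtain ⟨i, rfl⟩ := List.mem_ofFn.mp hp
    refine ⟨(Term.func f ts, Term.func f us), List.mem_cons_self, ?_⟩
    rcases hor with h1 | h1
    · exact Or.inl (by
        simp only [Term.varFinset, Finset.mem_biUnion, Finset.mem_univ, true_and]
        exact ⟨i, h1⟩)
    · exact Or.inr (by
        simp only [Term.varFinset, Finset.mem_biUnion, Finset.mem_univ, true_and]
        exact ⟨i, h1⟩)
  · exact ⟨p, List.mem_cons_of_mem _ hp, hor⟩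

lemma ssize_decomp {n : ℕ} (f : L.Functions n) (g : L.Functions n)
    (ts us : Fin n → L.Term ℕ) (E : Sys L) :
    ssize ((List.ofFn fun i => (ts i, us i)) ++ E) <
      ssize ((Term.func f ts, Term.func g us) :: E) := by
  simp only [ssize, List.map_append, List.sum_append, List.map_cons, List.sum_cons,
    List.map_ofFn]
  have h1 : (List.ofFn ((fun p : L.Term ℕ × L.Term ℕ => tsize p.1 + tsize p.2) ∘
      fun i => (ts i, us i))).sum = ∑ i, (tsize (ts i) + tsize (us i)) := List.sum_ofFn
  rw [h1]
  have h2 : tsize (Term.func f ts) = 1 + ∑ i, tsize (ts i) := rfl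
  have h3 : tsize (Term.func g us) = 1 + ∑ i, tsize (us i) := rfl
  rw [h2, h3, Finset.sum_add_distrib]
  omega

lemma OccAt_nil_inv {x : ℕ} {t : L.Term ℕ} (h : OccAt x t []) : t = Term.var x := by
  cases h; rfl

/-! ### The main induction -/

theorem key (M : Type*) [L.Structure M] (m0 : M) {m : ℕ}
    (F : (Σ n : ℕ, L.Functions n) ≃ Fin m) :
    ∀ (a b : ℕ) (E : Sys L), (svars E).card ≤ a → ssize E ≤ b → Fails M E →
    ∃ (A : Type) (_ : L.Structure A), Finite A ∧ Nonempty A ∧ Fails A E := by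
  intro a
  induction a using Nat.strong_induction_on with
  | _ a iha =>
  intro b
  induction b using Nat.strong_induction_on with
  | _ b ihb =>
  intro E hcard hsize hM
  -- the variable-against-term step, as a local recipe
  have varStep : ∀ (x : ℕ) (t : L.Term ℕ) (E' : Sys L),
      Fails M ((Term.var x, t) :: E') → t ≠ Term.var x →
      (svars ((Term.var x, t) :: E')).card ≤ a →
      ∃ (A : Type) (_ : L.Structure A), Finite A ∧ Nonempty A ∧
        Fails A ((Term.var x, t) :: E') := by
    intro x t E' hM' htne hcard'
    by_cases hocc : ∃ q, OccAt x t q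
    · obtain ⟨q, hq⟩ := hocc
      have hqne : q ≠ [] := by
        intro hq0
        subst hq0
        exact htne (OccAt_nil_inv hq)
      refine ⟨OccA q, occStruct q, inferInstance, inferInstance, ?_⟩
      intro v
      exact ⟨(Term.var x, t), List.mem_cons_self, occ_main hq hqne v⟩
    · have hx : x ∉ t.varFinset := fun hmem => hocc (exists_occ_of_mem_varFinset hmem)
      have hM'' : Fails M (substSys x t E') := fails_subst_of_fails hx hM'
      have hcard'' : (svars (substSys x t E')).card < (svars ((Term.var x, t) :: E')).card :=
        lt_of_le_of_lt (Finset.card_le_card (svars_substSys_subset hx E'))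
          (Finset.card_erase_lt_of_mem (x_mem_svars x t E'))
      obtain ⟨A, SA, hfin, hne', hfails⟩ :=
        iha (svars (substSys x t E')).card (lt_of_lt_of_le hcard'' hcard')
          (ssize (substSys x t E')) _ le_rfl le_rfl hM''
      exact ⟨A, SA, hfin, hne', fails_of_fails_subst hfails⟩
  rcases E with _ | ⟨⟨s, t⟩, E'⟩
  · exact absurd (hM fun _ => m0) (by simp)
  · cases s with
    | var x =>
      by_cases hvt : t = Term.var x
      · subst hvt
        have hsz : ssize E' < b := by
          have : ssize ((Term.var x, Term.var x) :: E') = 2 + ssize E' := by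
            simp [ssize, tsize]
          omega
        obtain ⟨A, SA, hfin, hne', hfails⟩ :=
          ihb (ssize E') hsz E'
            (le_trans (Finset.card_le_card (svars_tail_subset _ _)) hcard) le_rfl
            (fails_drop hM)
        exact ⟨A, SA, hfin, hne', fails_cons_of _ _ hfails⟩
      · exact varStep x t E' hM hvt hcard
    | @func nf f ts =>
      cases t with
      | var x =>
        have hM' : Fails M ((Term.var x, Term.func f ts) :: E') := fails_swap hM
        have hcard' : (svars ((Term.var x, Term.func f ts) :: E')).card ≤ a := by
          rw [show svars ((Term.var x, Term.func f ts) :: E')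
            = svars ((Term.func f ts, Term.var x) :: E') from svars_swap _ _ _]
          exact hcard
        obtain ⟨A, SA, hfin, hne', hfails⟩ :=
          varStep x (Term.func f ts) E' hM' (by intro h; cases h) hcard'
        exact ⟨A, SA, hfin, hne', fails_swap hfails⟩
      | @func ng g us =>
        by_cases hfg : (⟨nf, f⟩ : Σ n : ℕ, L.Functions n) = ⟨ng, g⟩
        · have hnn : nf = ng := congrArg Sigma.fst hfg
          subst hnn
          have hffg : f = g := by
            simpa using hfg
          subst hffg
          have hM'' : Fails M ((List.ofFn fun i => (ts i, us i)) ++ E') := fails_decomp hM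
          have hsz : ssize ((List.ofFn fun i => (ts i, us i)) ++ E') < b :=
            lt_of_lt_of_le (ssize_decomp f f ts us E') hsize
          obtain ⟨A, SA, hfin, hne', hfails⟩ :=
            ihb _ hsz _
              (le_trans (Finset.card_le_card (svars_decomp_subset f ts us E')) hcard)
              le_rfl hM''
          letI := SA
          letI := hfin
          letI := hne'
          refine ⟨UnA F A, unStruct, inferInstance, inferInstance, ?_⟩
          intro v
          by_contra hcon
          push_neg at hcon
          obtain ⟨p, hp, hnep⟩ := hfails (fun y => uproj (v y))
          rcases List.mem_append.mp hp with hp1 | hp1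
          · obtain ⟨i, rfl⟩ := List.mem_ofFn.mp hp1
            apply hnep
            have heq := hcon (Term.func f ts, Term.func f us) (List.mem_cons_self)
            have heq2 : Structure.funMap (M := UnA F A) f (fun i => Term.realize v (ts i))
                = Structure.funMap f (fun i => Term.realize v (us i)) := heq
            have h3 := un_funMap_inj f _ _ heq2 i
            rw [uproj_realize, uproj_realize] at h3
            exact h3
          · apply hnep
            have heq := hcon p (List.mem_cons_of_mem _ hp1)
            have := congrArg uproj heq
            rwa [uproj_realize, uproj_realize] at this
        · refine ⟨HeadA F, headStruct F, inferInstance, inferInstance, ?_⟩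
          intro v
          exact ⟨(Term.func f ts, Term.func g us), List.mem_cons_self,
            head_clash F f g hfg ts us v⟩

/-! ### Assembling a finite model from per-equation algebras -/

lemma assemble {m : ℕ} (F : (Σ n : ℕ, L.Functions n) ≃ Fin m) :
    ∀ E : Sys L,
      (∀ st ∈ E, ∃ (A : Type) (_ : L.Structure A), Finite A ∧ Nonempty A ∧
        ∀ v : ℕ → A, Term.realize v st.1 ≠ Term.realize v st.2) →
      ∃ (N : Type) (_ : L.Structure N), Finite N ∧ Nonempty N ∧
        (∀ (n : ℕ) (R : L.Relations n) (xs : Fin n → N), ¬ Structure.RelMap R xs) ∧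
        ∀ st ∈ E, ∀ v : ℕ → N, Term.realize v st.1 ≠ Term.realize v st.2 := by
  intro E
  induction E with
  | nil =>
    intro _
    exact ⟨HeadA F, headStruct F, inferInstance, inferInstance, fun n R xs h => h, by simp⟩
  | cons st E ih =>
    intro h
    obtain ⟨A, SA, hAfin, hAne, hA⟩ := h st (List.mem_cons_self)
    obtain ⟨N, SN, hNfin, hNne, hNrel, hN⟩ := ih (fun p hp => h p (List.mem_cons_of_mem _ hp))
    letI := SA
    letI := SN
    letI := hAfin; letI := hNfin; letI := hAne; letI := hNne
    refine ⟨PairA A N, pairStruct A N, inferInstance, inferInstance,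
      fun n R xs hh => hh, ?_⟩
    intro p hp v
    rcases List.mem_cons.mp hp with heq | hp
    · subst heq
      intro hcon
      rw [pair_realize, pair_realize] at hcon
      exact hA (fun y => (v y).val.1) (congrArg (fun z : PairA A N => z.val.1) hcon)
    · intro hcon
      rw [pair_realize, pair_realize] at hcon
      exact hN p hp (fun y => (v y).val.2) (congrArg (fun z : PairA A N => z.val.2) hcon)

/-! ### Relating formulas over `Empty ⊕ Fin k` to equation systems over `ℕ` -/

def eN (k : ℕ) : Empty ⊕ Fin k → ℕ := Sum.elim (fun e => e.elim) Fin.val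

def eqnsOf {k : ℕ} : L.BoundedFormula Empty k → Sys L
  | .equal t₁ t₂ => [(t₁.relabel (eN k), t₂.relabel (eN k))]
  | _ => []

lemma realize_foldr_notnot {N : Type*} [L.Structure N] {k : ℕ}
    (θs : List (L.BoundedFormula Empty k)) (v : Empty → N) (xs : Fin k → N) :
    ((θs.map BoundedFormula.not).foldr (· ⊓ ·) ⊤).Realize v xs ↔
      ∀ θ ∈ θs, ¬ θ.Realize v xs := by
  induction θs with
  | nil => simp
  | cons θ θs ih =>
    simp only [List.map_cons, List.foldr_cons, BoundedFormula.realize_inf,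
      BoundedFormula.realize_not, ih, List.mem_cons]
    constructor
    · rintro ⟨h1, h2⟩ ψ (rfl | hmem)
      · exact h1
      · exact h2 ψ hmem
    · intro h
      exact ⟨h θ (Or.inl rfl), fun ψ hmem => h ψ (Or.inr hmem)⟩

lemma realize_sentence_iff (N : Type*) [L.Structure N] {k : ℕ}
    (θs : List (L.BoundedFormula Empty k)) :
    (N ⊨ ((θs.map BoundedFormula.not).foldr (· ⊓ ·) ⊤).alls) ↔
      ∀ (xs : Fin k → N), ∀ θ ∈ θs, ¬ θ.Realize (fun e : Empty => e.elim) xs := by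
  have h0 : (N ⊨ ((θs.map BoundedFormula.not).foldr (· ⊓ ·) ⊤).alls) ↔
      ∀ xs : Fin k → N, ((θs.map BoundedFormula.not).foldr (· ⊓ ·) ⊤).Realize
        (default : Empty → N) xs := BoundedFormula.realize_alls
  rw [h0]
  have hv : (default : Empty → N) = (fun e : Empty => e.elim) := Subsingleton.elim _ _
  rw [hv]
  constructor
  · intro h xs θ hmem
    exact (realize_foldr_notnot θs _ xs).mp (h xs) θ hmem
  · intro h xs
    exact (realize_foldr_notnot θs _ xs).mpr (h xs)

end NegUnivFMP

open NegUnivFMP in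
theorem negUnivFMP_aux {L : Language}
    [Finite (Σ n : ℕ, L.Functions n)] [Finite (Σ n : ℕ, L.Relations n)]
    {k : ℕ} (θs : List (L.BoundedFormula Empty k)) (hθ : ∀ θ ∈ θs, θ.IsAtomic) :
    (∃ (M : Type) (_ : L.Structure M) (_ : Nonempty M),
        M ⊨ ((θs.map BoundedFormula.not).foldr (· ⊓ ·) ⊤).alls) ↔
      (∃ (M : Type) (_ : Fintype M) (_ : L.Structure M) (_ : Nonempty M),
        M ⊨ ((θs.map BoundedFormula.not).foldr (· ⊓ ·) ⊤).alls) := by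
  constructor
  · rintro ⟨M, SM, hMne, hM⟩
    obtain ⟨m, ⟨F⟩⟩ := Finite.exists_equiv_fin (Σ n : ℕ, L.Functions n)
    obtain ⟨m₀⟩ := hMne
    rw [realize_sentence_iff] at hM
    have hpairs : ∀ st ∈ θs.flatMap eqnsOf, ∀ v : ℕ → M,
        Term.realize v st.1 ≠ Term.realize v st.2 := by
      intro st hst v
      obtain ⟨θ, hθmem, hstθ⟩ := List.mem_flatMap.mp hst
      cases θ with
      | falsum => simp [eqnsOf] at hstθ
      | equal t₁ t₂ =>
        simp only [eqnsOf, List.mem_singleton] at hstθ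
        subst hstθ
        intro hcon
        apply hM (fun i => v i.val) _ hθmem
        show Term.realize (Sum.elim (fun e : Empty => e.elim) fun i => v i.val) t₁
          = Term.realize (Sum.elim (fun e : Empty => e.elim) fun i => v i.val) t₂
        rw [Term.realize_relabel, Term.realize_relabel] at hcon
        have hfun : (v ∘ eN k) = Sum.elim (fun e : Empty => e.elim) fun i => v i.val := by
          funext z
          cases z with
          | inl e => exact e.elim
          | inr i => rfl
        rwa [hfun] at hcon
      | rel R tss => simp [eqnsOf] at hstθ
      | imp φ ψ => simp [eqnsOf] at hstθ
      | all φ => simp [eqnsOf] at hstθ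
    have hper : ∀ st ∈ θs.flatMap eqnsOf, ∃ (A : Type) (_ : L.Structure A),
        Finite A ∧ Nonempty A ∧
        ∀ v : ℕ → A, Term.realize v st.1 ≠ Term.realize v st.2 := by
      intro st hst
      obtain ⟨A, SA, hfin, hne, hfails⟩ :=
        key M m₀ F (svars [st]).card (ssize [st]) [st] le_rfl le_rfl
          (fun v => ⟨st, List.mem_cons_self, hpairs st hst v⟩)
      refine ⟨A, SA, hfin, hne, fun v => ?_⟩
      obtain ⟨p, hp, hnep⟩ := hfails v
      have : p = st := by simpa using hp
      subst this
      exact hnep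
    obtain ⟨N, SN, hNfin, hNne, hNrel, hN⟩ := assemble F _ hper
    letI := SN
    refine ⟨N, @Fintype.ofFinite N hNfin, SN, hNne, ?_⟩
    rw [realize_sentence_iff]
    intro xs θ hθmem
    cases hθ θ hθmem with
    | equal t₁ t₂ =>
      intro hcon
      have hcon2 : Term.realize (Sum.elim (fun e : Empty => e.elim) xs) t₁
          = Term.realize (Sum.elim (fun e : Empty => e.elim) xs) t₂ := hcon
      obtain ⟨n₀⟩ := hNne
      set v : ℕ → N := fun i => if h : i < k then xs ⟨i, h⟩ else n₀ with hv
      have hmem2 : (t₁.relabel (eN k), t₂.relabel (eN k)) ∈ θs.flatMap eqnsOf := by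
        refine List.mem_flatMap.mpr ⟨t₁.bdEqual t₂, hθmem, ?_⟩
        show _ ∈ eqnsOf (BoundedFormula.equal t₁ t₂)
        simp [eqnsOf]
      apply hN _ hmem2 v
      rw [Term.realize_relabel, Term.realize_relabel]
      have hfun : (v ∘ eN k) = Sum.elim (fun e : Empty => e.elim) xs := by
        funext z
        cases z with
        | inl e => exact e.elim
        | inr i =>
          show v i.val = xs i
          rw [hv]
          simp only
          rw [dif_pos i.2]
      rw [hfun]
      exact hcon2
    | rel R tss =>
      intro hcon
      rw [BoundedFormula.realize_rel] at hcon
      exact hNrel _ R _ hcon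
  · rintro ⟨N, FN, SN, hNne, h⟩
    exact ⟨N, SN, hNne, h⟩


/-- Finite model property for negative universal sentences: over a language with finitely many
function and relation symbols, a sentence of the form (∀v₁)…(∀vₖ)(¬θ₁ ∧ … ∧ ¬θₙ), with each
θᵢ atomic, has a (nonempty) model iff it has a finite (nonempty) model. -/
theorem negative_universal_finite_model_property {L : Language}
    [Finite (Σ n : ℕ, L.Functions n)] [Finite (Σ n : ℕ, L.Relations n)]
    {k : ℕ} (θs : List (L.BoundedFormula Empty k)) (hθ : ∀ θ ∈ θs, θ.IsAtomic) :
    (∃ (M : Type) (_ : L.Structure M) (_ : Nonempty M),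
        M ⊨ ((θs.map BoundedFormula.not).foldr (· ⊓ ·) ⊤).alls) ↔
      (∃ (M : Type) (_ : Fintype M) (_ : L.Structure M) (_ : Nonempty M),
        M ⊨ ((θs.map BoundedFormula.not).foldr (· ⊓ ·) ⊤).alls) :=
  negUnivFMP_aux θs hθ
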